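/- Let 0 < q < ∞ and 0 < p < 2 satisfy 1/p = 1/q + 1/2. Let (t_ν)_{ν∈F} be nonnegative reals and (ρ_j)_{j≥1} with ρ_j > 1 and (ρ_j^{−1}) ∈ ℓ^q. If ∑_{ν∈F} (ρ^ν t_ν)^2 < ∞, then ∑_{ν∈F} t_ν^p < ∞, with the bound (∑ t_ν^p)^{1/p} ≤ (∑ (ρ^ν t_ν)^2)^{1/2} (∑_{ν∈F} ρ^{−qν})^{1/q}. -/

import Mathlib

open scoped BigOperators
open Finset



-- geometric sum over an arbitrary finite set of ℕ
lemma aux_geom_sum_le {x : ℝ} (h0 : 0 ≤ x) (h1 : x < 1) (K : Finset ℕ) :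
    ∑ k ∈ K, x ^ k ≤ (1 - x)⁻¹ := by
  calc ∑ k ∈ K, x ^ k ≤ ∑' k : ℕ, x ^ k :=
        Summable.sum_le_tsum K (fun k _ => pow_nonneg h0 k) (summable_geometric_of_lt_one h0 h1)
    _ = (1 - x)⁻¹ := tsum_geometric_of_lt_one h0 h1

lemma aux_factor (x : ℕ → ℝ) (N : ℕ) (ν : ℕ →₀ ℕ) :
    ∏ j ∈ ν.support, x j ^ ν j
      = (∏ j ∈ (ν.erase N).support, x j ^ (ν.erase N) j) * x N ^ ν N := by
  rw [Finsupp.support_erase]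
  by_cases hN : N ∈ ν.support
  · rw [← Finset.prod_erase_mul _ _ hN]
    congr 1
    exact Finset.prod_congr rfl fun j hj => by
      rw [Finsupp.erase_ne (Finset.ne_of_mem_erase hj)]
  · have hν : ν N = 0 := Finsupp.notMem_support_iff.mp hN
    rw [hν, pow_zero, mul_one, Finset.erase_eq_of_notMem hN]
    exact Finset.prod_congr rfl fun j hj => by
      rw [Finsupp.erase_ne (fun h : j = N => hN (h ▸ hj))]

lemma aux_key (x : ℕ → ℝ) (h0 : ∀ j, 0 ≤ x j) (h1 : ∀ j, x j < 1) :
    ∀ N : ℕ, ∀ S : Finset (ℕ →₀ ℕ), (∀ ν ∈ S, ν.support ⊆ Finset.range N) →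
      ∑ ν ∈ S, ∏ j ∈ ν.support, x j ^ ν j ≤ ∏ j ∈ Finset.range N, (1 - x j)⁻¹ := by
  have hG0 : ∀ ν : ℕ →₀ ℕ, 0 ≤ ∏ j ∈ ν.support, x j ^ ν j :=
    fun ν => Finset.prod_nonneg fun j _ => pow_nonneg (h0 j) _
  intro N
  induction N with
  | zero =>
    intro S hS
    have hS' : S ⊆ {0} := by
      intro ν hν
      have : ν.support = ∅ := Finset.subset_empty.mp (by simpa using hS ν hν)
      simp [Finset.mem_singleton, ← Finsupp.support_eq_empty.mp this]
    calc ∑ ν ∈ S, ∏ j ∈ ν.support, x j ^ ν j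
        ≤ ∑ ν ∈ ({0} : Finset (ℕ →₀ ℕ)), ∏ j ∈ ν.support, x j ^ ν j :=
          Finset.sum_le_sum_of_subset_of_nonneg hS' (fun ν _ _ => hG0 ν)
      _ = 1 := by simp
      _ = ∏ j ∈ Finset.range 0, (1 - x j)⁻¹ := by simp
  | succ N ih =>
    intro S hS
    set e : (ℕ →₀ ℕ) → (ℕ →₀ ℕ) × ℕ := fun ν => (ν.erase N, ν N) with he
    have hinj : Set.InjOn e S := by
      intro ν _ μ _ h
      have h1' : ν.erase N = μ.erase N := (Prod.mk.injEq _ _ _ _).mp h |>.1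
      have h2' : ν N = μ N := (Prod.mk.injEq _ _ _ _).mp h |>.2
      have := Finsupp.erase_add_single N ν
      rw [h1', h2', Finsupp.erase_add_single] at this
      exact this.symm
    have step1 : ∑ ν ∈ S, ∏ j ∈ ν.support, x j ^ ν j
        = ∑ p ∈ S.image e, (∏ j ∈ p.1.support, x j ^ p.1 j) * x N ^ p.2 := by
      rw [Finset.sum_image (fun a ha b hb h => hinj ha hb h)]
      exact Finset.sum_congr rfl fun ν _ => aux_factor x N ν
    have hsub : S.image e ⊆ (S.image fun ν => ν.erase N) ×ˢ (S.image fun ν => ν N) := by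
      intro p hp
      obtain ⟨ν, hν, rfl⟩ := Finset.mem_image.mp hp
      exact Finset.mem_product.mpr ⟨Finset.mem_image_of_mem _ hν, Finset.mem_image_of_mem _ hν⟩
    have step2 : ∑ p ∈ S.image e, (∏ j ∈ p.1.support, x j ^ p.1 j) * x N ^ p.2
        ≤ ∑ p ∈ (S.image fun ν => ν.erase N) ×ˢ (S.image fun ν => ν N),
            (∏ j ∈ p.1.support, x j ^ p.1 j) * x N ^ p.2 :=
      Finset.sum_le_sum_of_subset_of_nonneg hsub
        (fun p _ _ => mul_nonneg (hG0 p.1) (pow_nonneg (h0 N) _))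
    have step3 : ∑ p ∈ (S.image fun ν => ν.erase N) ×ˢ (S.image fun ν => ν N),
            (∏ j ∈ p.1.support, x j ^ p.1 j) * x N ^ p.2
        = (∑ a ∈ S.image fun ν => ν.erase N, ∏ j ∈ a.support, x j ^ a j)
            * ∑ b ∈ S.image fun ν => ν N, x N ^ b := by
      rw [Finset.sum_mul_sum]
      rw [Finset.sum_product]
    have hIH : ∑ a ∈ S.image (fun ν => ν.erase N), ∏ j ∈ a.support, x j ^ a j
        ≤ ∏ j ∈ Finset.range N, (1 - x j)⁻¹ := by
      apply ih
      intro a ha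
      obtain ⟨ν, hν, rfl⟩ := Finset.mem_image.mp ha
      intro j hj
      rw [Finsupp.support_erase] at hj
      have hjN : j ≠ N := Finset.ne_of_mem_erase hj
      have : j ∈ ν.support := Finset.mem_of_mem_erase hj
      have := hS ν hν this
      rw [Finset.mem_range] at this ⊢
      omega
    have hgeom : ∑ b ∈ S.image (fun ν => ν N), x N ^ b ≤ (1 - x N)⁻¹ :=
      aux_geom_sum_le (h0 N) (h1 N) _
    calc ∑ ν ∈ S, ∏ j ∈ ν.support, x j ^ ν j
        ≤ (∑ a ∈ S.image fun ν => ν.erase N, ∏ j ∈ a.support, x j ^ a j)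
            * ∑ b ∈ S.image fun ν => ν N, x N ^ b := by
          rw [step1, ← step3]; exact step2
      _ ≤ (∏ j ∈ Finset.range N, (1 - x j)⁻¹) * (1 - x N)⁻¹ := by
          apply mul_le_mul hIH hgeom
          · exact Finset.sum_nonneg fun b _ => pow_nonneg (h0 N) _
          · exact Finset.prod_nonneg fun j _ => inv_nonneg.mpr (by linarith [h1 j])
      _ = ∏ j ∈ Finset.range (N + 1), (1 - x j)⁻¹ := (Finset.prod_range_succ _ _).symm

lemma aux_summable_y {x : ℕ → ℝ} (h0 : ∀ j, 0 ≤ x j) (h1 : ∀ j, x j < 1)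
    (hx : Summable x) : Summable fun j => x j / (1 - x j) := by
  have htend : Filter.Tendsto x Filter.atTop (nhds 0) := hx.tendsto_atTop_zero
  have hev : ∀ᶠ j in Filter.atTop, x j < 1 / 2 :=
    htend.eventually_lt_const (by norm_num)
  obtain ⟨M, hM⟩ := Filter.eventually_atTop.mp hev
  rw [← summable_nat_add_iff M]
  apply Summable.of_nonneg_of_le
    (fun n => div_nonneg (h0 _) (by linarith [h1 (n + M)]))
    (fun n => ?_) (((summable_nat_add_iff M).mpr hx).mul_left 2)
  have hx' := hM (n + M) (Nat.le_add_left M n)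
  have h1' := h1 (n + M)
  have h0' := h0 (n + M)
  rw [div_le_iff₀ (by linarith)]
  nlinarith

lemma aux_summable (x : ℕ → ℝ) (h0 : ∀ j, 0 ≤ x j) (h1 : ∀ j, x j < 1)
    (hx : Summable x) :
    Summable fun ν : ℕ →₀ ℕ => ∏ j ∈ ν.support, x j ^ ν j := by
  have hy := aux_summable_y h0 h1 hx
  set Y : ℝ := ∑' j, x j / (1 - x j) with hY
  apply summable_of_sum_le
    (fun ν => Finset.prod_nonneg fun j _ => pow_nonneg (h0 j) _)
  intro S
  set N : ℕ := S.sup (fun ν => ν.support.sup id) + 1 with hN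
  have hsupp : ∀ ν ∈ S, ν.support ⊆ Finset.range N := by
    intro ν hν j hj
    have : id j ≤ ν.support.sup id := Finset.le_sup hj
    have : ν.support.sup id ≤ S.sup (fun ν => ν.support.sup id) := Finset.le_sup (f := fun ν : ℕ →₀ ℕ => ν.support.sup id) hν
    simp only [id] at *
    rw [Finset.mem_range]; omega
  calc ∑ ν ∈ S, ∏ j ∈ ν.support, x j ^ ν j
      ≤ ∏ j ∈ Finset.range N, (1 - x j)⁻¹ := aux_key x h0 h1 N S hsupp
    _ ≤ ∏ j ∈ Finset.range N, Real.exp (x j / (1 - x j)) := by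
        apply Finset.prod_le_prod
        · exact fun j _ => inv_nonneg.mpr (by linarith [h1 j])
        · intro j _
          have h1j := h1 j; have h0j := h0 j
          have hpos : (0:ℝ) < 1 - x j := by linarith
          have := Real.add_one_le_exp (x j / (1 - x j))
          have heq : x j / (1 - x j) + 1 = (1 - x j)⁻¹ := by
            field_simp
            ring
          linarith [heq ▸ this]
    _ = Real.exp (∑ j ∈ Finset.range N, x j / (1 - x j)) := (Real.exp_sum _ _).symm
    _ ≤ Real.exp Y := by
        apply Real.exp_le_exp.mpr
        exact Summable.sum_le_tsum _ (fun j _ => div_nonneg (h0 j) (by linarith [h1 j])) hy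




/-- Hölder's inequality argument: weighted `ℓ²` summability with weights `ρ^ν`,
`ρ_j > 1`, `(ρ_j⁻¹) ∈ ℓ^q`, implies `ℓ^p` summability with `1/p = 1/q + 1/2`. -/
theorem stmt2 (p q : ℝ) (hq : 0 < q) (hp : 0 < p) (hp2 : p < 2)
    (hpq : 1 / p = 1 / q + 1 / 2)
    (t : (ℕ →₀ ℕ) → ℝ) (ht : ∀ ν, 0 ≤ t ν)
    (ρ : ℕ → ℝ) (hρ : ∀ j, 1 < ρ j)
    (hρq : Summable fun j => (ρ j)⁻¹ ^ q)
    (hw : Summable fun ν : ℕ →₀ ℕ =>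
      ((∏ j ∈ ν.support, ρ j ^ (ν j : ℕ)) * t ν) ^ 2) :
    (Summable fun ν : ℕ →₀ ℕ => t ν ^ p) ∧
      (∑' ν : ℕ →₀ ℕ, t ν ^ p) ^ (1 / p)
        ≤ (∑' ν : ℕ →₀ ℕ, ((∏ j ∈ ν.support, ρ j ^ (ν j : ℕ)) * t ν) ^ 2) ^ (1 / 2 : ℝ)
          * (∑' ν : ℕ →₀ ℕ, ∏ j ∈ ν.support, ρ j ^ (-(q * (ν j : ℝ)))) ^ (1 / q) := by
  have hρ0 : ∀ j, (0:ℝ) < ρ j := fun j => lt_trans one_pos (hρ j)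
  set A : (ℕ →₀ ℕ) → ℝ := fun ν => ∏ j ∈ ν.support, ρ j ^ (ν j : ℕ) with hA
  set B : (ℕ →₀ ℕ) → ℝ := fun ν => ∏ j ∈ ν.support, ρ j ^ (-(q * (ν j : ℝ))) with hBdef
  have hApos : ∀ ν, 0 < A ν := fun ν =>
    Finset.prod_pos fun j _ => pow_pos (hρ0 j) _
  -- x j and its properties
  set x : ℕ → ℝ := fun j => (ρ j)⁻¹ ^ q with hxdef
  have hx0 : ∀ j, 0 ≤ x j := fun j => Real.rpow_nonneg (inv_nonneg.mpr (hρ0 j).le) q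
  have hx1 : ∀ j, x j < 1 := fun j =>
    Real.rpow_lt_one (inv_nonneg.mpr (hρ0 j).le) (inv_lt_one_of_one_lt₀ (hρ j)) hq
  -- B as products of x powers
  have hBx : ∀ ν, B ν = ∏ j ∈ ν.support, x j ^ (ν j : ℕ) := by
    intro ν
    refine Finset.prod_congr rfl fun j _ => ?_
    rw [hxdef, ← Real.rpow_natCast ((ρ j)⁻¹ ^ q) (ν j),
      ← Real.rpow_mul (inv_nonneg.mpr (hρ0 j).le),
      Real.inv_rpow (hρ0 j).le, ← Real.rpow_neg (hρ0 j).le]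
  have hBsum : Summable B := by
    rw [show B = fun ν : ℕ →₀ ℕ => ∏ j ∈ ν.support, x j ^ (ν j : ℕ) from funext hBx]
    exact aux_summable x hx0 hx1 hρq
  have hBA : ∀ ν, B ν = ((A ν)⁻¹) ^ q := by
    intro ν
    rw [hA, hBdef]
    simp only
    rw [← Finset.prod_inv_distrib, ← Real.finset_prod_rpow _ _
      (fun j _ => inv_nonneg.mpr (pow_nonneg (hρ0 j).le _)) q]
    refine Finset.prod_congr rfl fun j _ => ?_
    rw [← Real.rpow_natCast (ρ j) (ν j), ← Real.rpow_neg_one,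
      ← Real.rpow_mul (hρ0 j).le, ← Real.rpow_mul (hρ0 j).le]
    ring_nf
  have hB0 : ∀ ν, 0 ≤ B ν := fun ν => by
    rw [hBA ν]; exact Real.rpow_nonneg (inv_nonneg.mpr (hApos ν).le) q
  -- Hölder setup
  have hp0 : p ≠ 0 := ne_of_gt hp
  have hq0 : q ≠ 0 := ne_of_gt hq
  have hconj : (2 / p).HolderConjugate (q / p) := by
    constructor
    · rw [inv_div, inv_div, inv_one]
      field_simp at hpq ⊢
      linarith
    · positivity
    · positivity
  set f : (ℕ →₀ ℕ) → ℝ := fun ν => (A ν * t ν) ^ p with hfdef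
  set g : (ℕ →₀ ℕ) → ℝ := fun ν => ((A ν)⁻¹) ^ p with hgdef
  have hf0 : ∀ ν, 0 ≤ f ν := fun ν =>
    Real.rpow_nonneg (mul_nonneg (hApos ν).le (ht ν)) p
  have hg0 : ∀ ν, 0 ≤ g ν := fun ν =>
    Real.rpow_nonneg (inv_nonneg.mpr (hApos ν).le) p
  have hfr : ∀ ν, f ν ^ (2 / p) = (A ν * t ν) ^ 2 := by
    intro ν
    rw [hfdef]
    simp only
    rw [← Real.rpow_natCast (A ν * t ν) 2, ← Real.rpow_mul (mul_nonneg (hApos ν).le (ht ν))]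
    congr 1
    push_cast
    field_simp
  have hgs : ∀ ν, g ν ^ (q / p) = B ν := by
    intro ν
    rw [hgdef, hBA ν]
    simp only
    rw [← Real.rpow_mul (inv_nonneg.mpr (hApos ν).le), mul_div_assoc', mul_comm,
      mul_div_assoc, div_self hp0, mul_one]
  have hfg : ∀ ν, f ν * g ν = t ν ^ p := by
    intro ν
    rw [hfdef, hgdef]
    simp only
    rw [← Real.mul_rpow (mul_nonneg (hApos ν).le (ht ν)) (inv_nonneg.mpr (hApos ν).le),
      mul_comm (A ν) (t ν), mul_assoc, mul_inv_cancel₀ (ne_of_gt (hApos ν)), mul_one]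
  have hf_sum : Summable fun ν => f ν ^ (2 / p) := by
    rw [show (fun ν => f ν ^ (2 / p)) = fun ν : ℕ →₀ ℕ => (A ν * t ν) ^ 2 from funext hfr]
    exact hw
  have hg_sum : Summable fun ν => g ν ^ (q / p) := by
    rw [show (fun ν => g ν ^ (q / p)) = B from funext hgs]
    exact hBsum
  obtain ⟨hsum, hle⟩ :=
    Real.summable_and_inner_le_Lp_mul_Lq_tsum_of_nonneg hconj hf0 hg0 hf_sum hg_sum
  rw [show (fun ν => f ν * g ν) = fun ν : ℕ →₀ ℕ => t ν ^ p from funext hfg] at hsum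
  rw [tsum_congr hfg, tsum_congr hfr, tsum_congr hgs] at hle
  refine ⟨hsum, ?_⟩
  -- raise the inequality to the power 1/p
  have htp0 : 0 ≤ ∑' ν, t ν ^ p := tsum_nonneg fun ν => Real.rpow_nonneg (ht ν) p
  have hX0 : 0 ≤ ∑' ν : ℕ →₀ ℕ, (A ν * t ν) ^ 2 :=
    tsum_nonneg fun ν => sq_nonneg _
  have hY0 : 0 ≤ ∑' ν, B ν := tsum_nonneg hB0
  have h1 : (∑' ν, t ν ^ p) ^ (1 / p)
      ≤ ((∑' ν : ℕ →₀ ℕ, (A ν * t ν) ^ 2) ^ (1 / (2 / p))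
          * (∑' ν, B ν) ^ (1 / (q / p))) ^ (1 / p) :=
    Real.rpow_le_rpow htp0 hle (by positivity)
  calc (∑' ν, t ν ^ p) ^ (1 / p)
      ≤ ((∑' ν : ℕ →₀ ℕ, (A ν * t ν) ^ 2) ^ (1 / (2 / p))
          * (∑' ν, B ν) ^ (1 / (q / p))) ^ (1 / p) := h1
    _ = (∑' ν : ℕ →₀ ℕ, (A ν * t ν) ^ 2) ^ (1 / 2 : ℝ) * (∑' ν, B ν) ^ (1 / q) := by
        rw [Real.mul_rpow (Real.rpow_nonneg hX0 _) (Real.rpow_nonneg hY0 _),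
          ← Real.rpow_mul hX0, ← Real.rpow_mul hY0]
        rw [one_div_div, one_div_div]
        congr 1 <;> congr 1 <;> field_simp <;> ring
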